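/- arXiv:2305.12230 — 2 statements merged into one kernel-verified Lean document; each statement's English description precedes it below -/
import Mathlib

section
/- Let n ≥ 1 and let (ξ_k)_{k≥1} be a sequence of points ξ_k = (ξ_{1,k}, …, ξ_{n,k}) in the unit cube [0,1)^n that is well distributed, i.e. there exist a constant C > 0 and infinitely many positive integers q such that for every η = (η_1, …, η_n) ∈ [0,1)^n for which the box B_{C,q}(η) = ∏_{j=1}^n [η_j, η_j + C/q^{1/n}) is contained in [0,1)^n, there exists a positive integer k ≤ q with ξ_k ∈ B_{C,q}(η). Then for Lebesgue-almost all η = (η_1, …, η_n) ∈ [0,1)^n one has liminf_{k→∞} k^{1/n} · max_{1≤j≤n} ‖ξ_{j,k} − η_j‖ = 0, where ‖x‖ = min_{a∈ℤ} |x − a| denotes the distance from x to the nearest integer. -/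
open MeasureTheory Filter

/-- Distance from `x` to the nearest integer: `‖x‖ = min_{a ∈ ℤ} |x - a|`. -/
noncomputable def nint (x : ℝ) : ℝ := ⨅ a : ℤ, |x - (a : ℝ)|

open Metric Set Topology ENNReal

lemma nint_bddBelow (x : ℝ) : BddBelow (Set.range fun a : ℤ => |x - (a : ℝ)|) :=
  ⟨0, by rintro y ⟨a, rfl⟩; positivity⟩

lemma nint_nonneg (x : ℝ) : 0 ≤ nint x := le_ciInf fun a => abs_nonneg _

lemma nint_le_abs (x : ℝ) : nint x ≤ |x| := by
  simpa [nint] using ciInf_le (nint_bddBelow x) (0 : ℤ)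

set_option maxHeartbeats 1000000 in
lemma core_density_bound (n : ℕ) (hn : 1 ≤ n) (ξ : ℕ → Fin n → ℝ)
    (C : ℝ) (hC : 0 < C)
    (hwd : ∀ Q : ℕ, ∃ q : ℕ, Q ≤ q ∧ 1 ≤ q ∧
      ∀ η : Fin n → ℝ, (∀ j, η j ∈ Set.Ico (0 : ℝ) 1) →
        (Set.univ.pi fun j => Set.Ico (η j) (η j + C / (q : ℝ) ^ ((1 : ℝ) / n))) ⊆
          (Set.univ.pi fun _ : Fin n => Set.Ico (0 : ℝ) 1) →
        ∃ k : ℕ, 1 ≤ k ∧ k ≤ q ∧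
          ∀ j, ξ k j ∈ Set.Ico (η j) (η j + C / (q : ℝ) ^ ((1 : ℝ) / n)))
    (ε : ℝ) (hε : 0 < ε) (K : ℕ) (x : Fin n → ℝ)
    (r : ℝ) (hr : 0 < r) (hrx : ∀ j, 0 ≤ x j - r ∧ x j + r < 1) :
    volume ({η : Fin n → ℝ | ∀ k, K ≤ k → ε < (k : ℝ) ^ ((1:ℝ)/n) * ⨆ j, nint (ξ k j - η j)}
        ∩ Metric.closedBall x r) / volume (Metric.closedBall x r)
      ≤ ENNReal.ofReal (1 - (min (C/2) ε / (2*C))^n / 2) := by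
  haveI : Nonempty (Fin n) := Fin.pos_iff_nonempty.mp hn
  have hn0 : (0:ℝ) < n := by exact_mod_cast hn
  set E : Set (Fin n → ℝ) :=
    {η : Fin n → ℝ | ∀ k, K ≤ k → ε < (k : ℝ) ^ ((1:ℝ)/n) * ⨆ j, nint (ξ k j - η j)} with hE
  clear_value E
  set c' : ℝ := min (C/2) ε with hc'def
  clear_value c'
  have hc'0 : 0 < c' := by rw [hc'def]; exact lt_min (by positivity) hε
  have hc'C : c' ≤ C/2 := by rw [hc'def]; exact min_le_left _ _
  have hc'ε : c' ≤ ε := by rw [hc'def]; exact min_le_right _ _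
  set β : ℝ := (c' / (2*C))^n / 2 with hβdef
  clear_value β
  have hβ0 : 0 < β := by rw [hβdef]; positivity
  have hβhalf : β ≤ 1/2 := by
    have h1 : c' / (2*C) ≤ 1 := by
      rw [div_le_one (by positivity)]
      nlinarith
    have h2 := pow_le_one₀ (n := n) (by positivity : (0:ℝ) ≤ c' / (2*C)) h1
    rw [hβdef]
    linarith
  -- choice of q
  obtain ⟨Q, hQ⟩ := exists_nat_ge (max ((C/r)^n) (2*K*C^n/r^n))
  obtain ⟨q, hqQ, hq1, hq⟩ := hwd Q
  have hqR : max ((C/r)^n) (2*K*C^n/r^n) ≤ (q:ℝ) := hQ.trans (by exact_mod_cast hqQ)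
  have hq0 : (0:ℝ) < q := by exact_mod_cast hq1
  set p : ℝ := (q : ℝ) ^ ((1:ℝ)/n) with hpdef
  clear_value p
  have hp0 : 0 < p := hpdef ▸ Real.rpow_pos_of_pos hq0 _
  have hpn : p ^ n = q := by
    rw [hpdef, ← Real.rpow_natCast ((q:ℝ) ^ ((1:ℝ)/n)) n, ← Real.rpow_mul hq0.le]
    rw [one_div, inv_mul_cancel₀ (by exact_mod_cast hn0.ne')]
    exact Real.rpow_one _
  have hpC : C / r ≤ p := by
    have h1 : (C/r)^n ≤ p^n := by rw [hpn]; exact le_trans (le_max_left _ _) hqR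
    exact le_of_pow_le_pow_left₀ (by omega) hp0.le h1
  set s : ℝ := C / p with hsdef
  clear_value s
  have hs0 : 0 < s := by rw [hsdef]; positivity
  have hsr : s ≤ r := by
    rw [hsdef, div_le_iff₀ hp0]
    rw [div_le_iff₀ hr] at hpC
    linarith
  set t : ℝ := c' / p with htdef
  clear_value t
  have ht0 : 0 < t := by rw [htdef]; positivity
  have hts : t ≤ s/2 := by
    rw [htdef, hsdef, div_div C p 2, div_le_div_iff₀ hp0 (by positivity)]
    nlinarith
  set M : ℕ := Nat.floor (2*r/s) with hMdef
  clear_value M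
  have hM2 : (2:ℝ) ≤ 2*r/s := by
    rw [le_div_iff₀ hs0]; linarith
  have hMlow : r/s ≤ (M:ℝ) := by
    have h1 : 2*r/s - 1 < (M:ℝ) := by rw [hMdef]; exact Nat.sub_one_lt_floor _
    have h2 : (1:ℝ) ≤ r/s := by rw [le_div_iff₀ hs0]; linarith
    have h3 : 2*r/s = r/s + r/s := by ring
    linarith
  have hMs : (M:ℝ) * s ≤ 2*r := by
    have h1 : (M:ℝ) ≤ 2*r/s := by rw [hMdef]; exact Nat.floor_le (le_trans (by norm_num) hM2)
    calc (M:ℝ) * s ≤ (2*r/s) * s := by nlinarith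
      _ = 2*r := by field_simp
  -- tiles
  set a : (Fin n → Fin M) → Fin n → ℝ := fun m j => x j - r + (m j : ℕ) * s with hadef
  clear_value a
  have hmjM : ∀ (m : Fin n → Fin M) (j : Fin n), ((m j : ℕ) : ℝ) + 1 ≤ (M:ℝ) := by
    intro m j
    exact_mod_cast Nat.succ_le_of_lt (m j).isLt
  have hmul : ∀ (m : Fin n → Fin M) (j : Fin n), ((m j : ℕ) : ℝ) * s + s ≤ (M:ℝ) * s := by
    intro m j
    have := mul_le_mul_of_nonneg_right (hmjM m j) hs0.le
    linarith
  have ha_mem : ∀ (m : Fin n → Fin M) (j : Fin n), a m j ∈ Set.Ico (0:ℝ) 1 := by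
    intro m j
    have h0 : (0:ℝ) ≤ ((m j : ℕ) : ℝ) * s := mul_nonneg (Nat.cast_nonneg _) hs0.le
    have h1 := (hrx j).1
    have h2 := (hrx j).2
    have h3 := hmul m j
    have h4 := hMs
    constructor
    · simp only [hadef]; linarith
    · simp only [hadef]; linarith
  have ha_tile : ∀ (m : Fin n → Fin M) (j : Fin n),
      a m j + s < 1 ∧ x j - r ≤ a m j ∧ a m j + s ≤ x j + r := by
    intro m j
    have h0 : (0:ℝ) ≤ ((m j : ℕ) : ℝ) * s := mul_nonneg (Nat.cast_nonneg _) hs0.le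
    have h1 := (hrx j).1
    have h2 := (hrx j).2
    have h3 := hmul m j
    have h4 := hMs
    refine ⟨?_, ?_, ?_⟩ <;> · simp only [hadef]; linarith
  -- choose a point of the sequence in each tile
  have hex : ∀ m : Fin n → Fin M, ∃ k : ℕ, 1 ≤ k ∧ k ≤ q ∧
      ∀ j, ξ k j ∈ Set.Ico (a m j) (a m j + s) := by
    intro m
    refine hq (a m) (fun j => ha_mem m j) ?_
    intro y hy
    simp only [Set.mem_univ_pi] at hy ⊢
    intro j
    have hyj := hy j
    exact ⟨le_trans (ha_mem m j).1 hyj.1, lt_trans hyj.2 (ha_tile m j).1⟩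
  choose k hk1 hkq hkmem using hex
  have haux : ∀ m m' : Fin n → Fin M, k m = k m' → ∀ j, ((m j : ℕ) < (m' j : ℕ)) → False := by
    intro m m' hkk j hlt
    have h1 := (hkmem m j).2
    have h2 := (hkmem m' j).1
    rw [hkk] at h1
    have hcast : ((m j : ℕ) : ℝ) + 1 ≤ ((m' j : ℕ) : ℝ) := by exact_mod_cast hlt
    have h3 := mul_le_mul_of_nonneg_right hcast hs0.le
    have h4 : a m j + s ≤ a m' j := by simp only [hadef]; linarith
    linarith
  have kinj : Function.Injective k := by
    intro m m' hkk
    funext j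
    rcases Nat.lt_trichotomy (m j : ℕ) (m' j : ℕ) with h | h | h
    · exact (haux m m' hkk j h).elim
    · exact Fin.ext h
    · exact (haux m' m hkk.symm j h).elim
  -- sub-boxes
  set lo : (Fin n → Fin M) → Fin n → ℝ :=
    fun m j => if ξ (k m) j ≤ a m j + s/2 then ξ (k m) j else ξ (k m) j - t with hlodef
  clear_value lo
  set subbox : (Fin n → Fin M) → Set (Fin n → ℝ) :=
    fun m => Set.univ.pi fun j => Set.Ico (lo m j) (lo m j + t) with hsubdef
  clear_value subbox
  have hsub_tile : ∀ m, subbox m ⊆ Set.univ.pi fun j => Set.Ico (a m j) (a m j + s) := by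
    intro m y hy
    simp only [hsubdef, Set.mem_univ_pi] at hy ⊢
    intro j
    have hyj := hy j
    have hmem1 := (hkmem m j).1
    have hmem2 := (hkmem m j).2
    simp only [hlodef] at hyj
    split_ifs at hyj with h
    · exact ⟨by linarith [hyj.1], by linarith [hyj.2, hts]⟩
    · push_neg at h
      exact ⟨by linarith [hyj.1, hts], by linarith [hyj.2]⟩
  have hsub_near : ∀ m, ∀ η ∈ subbox m, ∀ j, |ξ (k m) j - η j| ≤ t := by
    intro m η hη j
    simp only [hsubdef, Set.mem_univ_pi] at hη
    have hηj := hη j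
    simp only [hlodef] at hηj
    rw [abs_le]
    split_ifs at hηj with h
    · exact ⟨by linarith [hηj.2], by linarith [hηj.1]⟩
    · exact ⟨by linarith [hηj.2], by linarith [hηj.1]⟩
  have hmeas : ∀ m, MeasurableSet (subbox m) := by
    intro m
    simp only [hsubdef]
    exact MeasurableSet.univ_pi fun j => measurableSet_Ico
  have hsub_vol : ∀ m, volume (subbox m) = ENNReal.ofReal (t^n) := by
    intro m
    simp only [hsubdef]
    rw [Real.volume_pi_Ico]
    simp only [add_sub_cancel_left]
    rw [Finset.prod_const, Finset.card_univ, Fintype.card_fin, ← ENNReal.ofReal_pow ht0.le]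
  set Good : Finset (Fin n → Fin M) := Finset.univ.filter (fun m => K ≤ k m) with hGooddef
  clear_value Good
  have hGoodE : ∀ m ∈ Good, ∀ η ∈ subbox m, η ∉ E := by
    intro m hm η hη hηE
    simp only [hGooddef, Finset.mem_filter] at hm
    have h1 : ((k m : ℝ)) ^ ((1:ℝ)/n) ≤ p := by
      rw [hpdef]
      exact Real.rpow_le_rpow (Nat.cast_nonneg _) (by exact_mod_cast hkq m) (by positivity)
    have h2 : (⨆ j, nint (ξ (k m) j - η j)) ≤ t :=
      ciSup_le fun j => (nint_le_abs _).trans (hsub_near m η hη j)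
    have h3 : (0:ℝ) ≤ ⨆ j, nint (ξ (k m) j - η j) := Real.iSup_nonneg fun j => nint_nonneg _
    have h4 : (k m : ℝ) ^ ((1:ℝ)/n) * ⨆ j, nint (ξ (k m) j - η j) ≤ p * t :=
      mul_le_mul h1 h2 h3 hp0.le
    have h5 : p * t = c' := by rw [htdef]; field_simp [hp0.ne']
    rw [hE, Set.mem_setOf_eq] at hηE
    have h6 := hηE (k m) hm.2
    linarith
  have hdisj : (↑Good : Set (Fin n → Fin M)).PairwiseDisjoint subbox := by
    intro m _ m' _ hne
    refine Set.disjoint_left.mpr fun y hy hy' => ?_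
    obtain ⟨j, hj⟩ := Function.ne_iff.mp hne
    have h1 := hsub_tile m hy
    have h2 := hsub_tile m' hy'
    simp only [Set.mem_univ_pi] at h1 h2
    have h1j := h1 j
    have h2j := h2 j
    have key : ∀ u u' : Fin n → Fin M, ((u j : ℕ) < (u' j : ℕ)) →
        y j ∈ Set.Ico (a u j) (a u j + s) → y j ∈ Set.Ico (a u' j) (a u' j + s) → False := by
      intro u u' hlt hu hu'
      have hcast : ((u j : ℕ) : ℝ) + 1 ≤ ((u' j : ℕ) : ℝ) := by exact_mod_cast hlt
      have h3 := mul_le_mul_of_nonneg_right hcast hs0.le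
      have h4 : a u j + s ≤ a u' j := by simp only [hadef]; linarith
      have := hu.2
      have := hu'.1
      linarith
    rcases Nat.lt_trichotomy (m j : ℕ) (m' j : ℕ) with h | h | h
    · exact key m m' h h1j h2j
    · exact hj (Fin.ext h)
    · exact key m' m h h2j h1j
  have hG : volume (⋃ m ∈ Good, subbox m) = (Good.card : ℝ≥0∞) * ENNReal.ofReal (t^n) := by
    rw [measure_biUnion_finset hdisj fun m _ => hmeas m]
    rw [Finset.sum_congr rfl fun m _ => hsub_vol m, Finset.sum_const, nsmul_eq_mul]
  -- cardinality bounds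
  have hbadcard : (Finset.univ.filter (fun m => ¬ K ≤ k m)).card ≤ K := by
    have hmapsto : ∀ m ∈ Finset.univ.filter (fun m => ¬ K ≤ k m), k m ∈ Finset.range K := by
      intro m hm
      simp only [Finset.mem_filter] at hm
      exact Finset.mem_range.mpr (by omega)
    calc (Finset.univ.filter (fun m => ¬ K ≤ k m)).card
        ≤ (Finset.range K).card := Finset.card_le_card_of_injOn k hmapsto kinj.injOn
      _ = K := Finset.card_range K
  have hcards : Good.card + (Finset.univ.filter (fun m => ¬ K ≤ k m)).card = M^n := by
    rw [hGooddef, Finset.card_filter_add_card_filter_not, Finset.card_univ]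
    simp [Fintype.card_fun]
  have hGoodcard : ((M:ℝ))^n - (K:ℝ) ≤ (Good.card : ℝ) := by
    have h1 : ((M:ℝ))^n = (Good.card : ℝ) + ((Finset.univ.filter (fun m => ¬ K ≤ k m)).card : ℝ) := by
      exact_mod_cast congrArg (Nat.cast : ℕ → ℝ) hcards.symm
    have h2 : ((Finset.univ.filter (fun m => ¬ K ≤ k m)).card : ℝ) ≤ (K:ℝ) := by
      exact_mod_cast hbadcard
    linarith
  have hMn : r^n * q / C^n ≤ ((M:ℝ))^n := by
    have heq : r/s = r*p/C := by rw [hsdef]; field_simp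
    have h1 : r * p / C ≤ (M:ℝ) := by rw [← heq]; exact hMlow
    calc r^n*q/C^n = (r*p/C)^n := by rw [div_pow, mul_pow, hpn]
      _ ≤ (M:ℝ)^n := pow_le_pow_left₀ (div_nonneg (mul_nonneg hr.le hp0.le) hC.le) h1 n
  have h2K : 2*(K:ℝ) ≤ r^n * q / C^n := by
    have h1 : 2*(K:ℝ)*C^n/r^n ≤ (q:ℝ) := le_trans (le_max_right _ _) hqR
    rw [div_le_iff₀ (pow_pos hr n)] at h1
    rw [le_div_iff₀ (pow_pos hC n)]
    nlinarith [pow_pos hr n, pow_pos hC n]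
  have hkey : (2*r)^n * β ≤ (Good.card:ℝ) * t^n := by
    have ht_n : t^n = c'^n / q := by rw [htdef, div_pow, hpn]
    have hG2 : r^n*q/C^n/2 ≤ (Good.card:ℝ) := by linarith
    have heq : (2*r)^n * β = (r^n*q/C^n/2) * (c'^n/q) := by
      rw [hβdef, div_pow, mul_pow, mul_pow]
      field_simp [hq0.ne', hC.ne']
    calc (2*r)^n * β = (r^n*q/C^n/2) * (c'^n/q) := heq
      _ ≤ (Good.card:ℝ) * (c'^n/q) := mul_le_mul_of_nonneg_right hG2 (le_of_lt (div_pos (pow_pos hc'0 n) hq0))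
      _ = (Good.card:ℝ) * t^n := by rw [ht_n]
  -- measure estimates
  set B := Metric.closedBall x r with hBdef
  have h2rn : (0:ℝ) < (2*r)^n := by positivity
  have hBvol : volume B = ENNReal.ofReal ((2*r)^n) := by
    rw [hBdef, Real.volume_pi_closedBall x hr.le, Fintype.card_fin]
  have hGB : (⋃ m ∈ Good, subbox m) ⊆ B := by
    intro y hy
    simp only [Set.mem_iUnion] at hy
    obtain ⟨m, hm, hym⟩ := hy
    have h1 := hsub_tile m hym
    simp only [Set.mem_univ_pi] at h1
    rw [hBdef, mem_closedBall, dist_pi_le_iff hr.le]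
    intro j
    have hj := h1 j
    have h2 := (ha_tile m j).2.1
    have h3 := (ha_tile m j).2.2
    rw [Real.dist_eq, abs_le]
    exact ⟨by linarith [hj.1], by linarith [hj.2]⟩
  have hEsub : E ∩ B ⊆ B \ ⋃ m ∈ Good, subbox m := by
    rintro y ⟨hyE, hyB⟩
    refine ⟨hyB, fun hyG => ?_⟩
    simp only [Set.mem_iUnion] at hyG
    obtain ⟨m, hm, hym⟩ := hyG
    exact hGoodE m hm y hym hyE
  have hGm : MeasurableSet (⋃ m ∈ Good, subbox m) :=
    MeasurableSet.biUnion Good.countable_toSet fun m _ => hmeas m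
  have hGfin : volume (⋃ m ∈ Good, subbox m) ≠ ⊤ := by
    rw [hG]; exact ENNReal.mul_ne_top (ENNReal.natCast_ne_top _) ENNReal.ofReal_ne_top
  have hvolG_ge : ENNReal.ofReal ((2*r)^n * β) ≤ volume (⋃ m ∈ Good, subbox m) := by
    rw [hG]
    have h1 : ENNReal.ofReal ((Good.card:ℝ) * t^n) = (Good.card : ℝ≥0∞) * ENNReal.ofReal (t^n) := by
      rw [ENNReal.ofReal_mul (Nat.cast_nonneg _), ENNReal.ofReal_natCast]
    rw [← h1]
    exact ENNReal.ofReal_le_ofReal hkey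
  have hstep : volume (E ∩ B) ≤ ENNReal.ofReal ((1-β) * (2*r)^n) := by
    calc volume (E ∩ B) ≤ volume (B \ ⋃ m ∈ Good, subbox m) := measure_mono hEsub
      _ = volume B - volume (⋃ m ∈ Good, subbox m) :=
          measure_diff hGB hGm.nullMeasurableSet hGfin
      _ ≤ ENNReal.ofReal ((2*r)^n) - ENNReal.ofReal ((2*r)^n * β) :=
          tsub_le_tsub hBvol.le hvolG_ge
      _ ≤ ENNReal.ofReal ((1-β) * (2*r)^n) := by
          rw [← ENNReal.ofReal_sub _ (mul_nonneg (by positivity) hβ0.le)]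
          exact ENNReal.ofReal_le_ofReal (le_of_eq (by ring))
  have hBne : volume B ≠ 0 := by
    rw [hBvol]
    exact (ENNReal.ofReal_pos.mpr h2rn).ne'
  calc volume (E ∩ B) / volume B ≤ ENNReal.ofReal ((1-β) * (2*r)^n) / volume B :=
        ENNReal.div_le_div_right hstep _
    _ = ENNReal.ofReal ((1-β) * (2*r)^n) / ENNReal.ofReal ((2*r)^n) := by rw [hBvol]
    _ = ENNReal.ofReal (1-β) := by
        rw [ENNReal.ofReal_mul (by linarith : (0:ℝ) ≤ 1 - β), mul_div_assoc,
          ENNReal.div_self (ENNReal.ofReal_pos.mpr h2rn).ne' ENNReal.ofReal_ne_top, mul_one]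

lemma liminf_eq_zero {f : ℕ → ℝ} (h0 : ∀ k, 0 ≤ f k)
    (h : ∀ i : ℕ, ∃ᶠ k in atTop, f k ≤ 1/((i:ℝ)+1)) : atTop.liminf f = 0 := by
  have hcob : IsCoboundedUnder (· ≥ ·) atTop f :=
    .of_frequently_le (a := 1) ((h 0).mono fun k hk => hk.trans (by norm_num))
  have hbdd : IsBoundedUnder (· ≥ ·) atTop f := isBoundedUnder_of ⟨0, fun k => h0 k⟩
  refine le_antisymm ?_ (le_liminf_of_le hcob (Eventually.of_forall h0))
  by_contra hlt
  push_neg at hlt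
  obtain ⟨i, hi⟩ := exists_nat_one_div_lt hlt
  exact absurd (liminf_le_of_frequently_le (h i) hbdd) (not_le.2 hi)

set_option maxHeartbeats 1000000 in
lemma bad_null (n : ℕ) (hn : 1 ≤ n) (ξ : ℕ → Fin n → ℝ)
    (C : ℝ) (hC : 0 < C)
    (hwd : ∀ Q : ℕ, ∃ q : ℕ, Q ≤ q ∧ 1 ≤ q ∧
      ∀ η : Fin n → ℝ, (∀ j, η j ∈ Set.Ico (0 : ℝ) 1) →
        (Set.univ.pi fun j => Set.Ico (η j) (η j + C / (q : ℝ) ^ ((1 : ℝ) / n))) ⊆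
          (Set.univ.pi fun _ : Fin n => Set.Ico (0 : ℝ) 1) →
        ∃ k : ℕ, 1 ≤ k ∧ k ≤ q ∧
          ∀ j, ξ k j ∈ Set.Ico (η j) (η j + C / (q : ℝ) ^ ((1 : ℝ) / n)))
    (ε : ℝ) (hε : 0 < ε) (K : ℕ) :
    volume ({η : Fin n → ℝ | ∀ k, K ≤ k → ε < (k : ℝ) ^ ((1:ℝ)/n) * ⨆ j, nint (ξ k j - η j)}
      ∩ (Set.univ.pi fun _ : Fin n => Set.Ico (0:ℝ) 1)) = 0 := by
  haveI : Nonempty (Fin n) := Fin.pos_iff_nonempty.mp hn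
  by_contra h
  set E : Set (Fin n → ℝ) :=
    {η : Fin n → ℝ | ∀ k, K ≤ k → ε < (k : ℝ) ^ ((1:ℝ)/n) * ⨆ j, nint (ξ k j - η j)} with hE
  set cube : Set (Fin n → ℝ) := Set.univ.pi fun _ : Fin n => Set.Ico (0:ℝ) 1 with hcube
  set S : Set (Fin n → ℝ) := E ∩ cube with hS
  have hSne : volume.restrict S ≠ 0 := by
    rw [Ne, Measure.restrict_eq_zero]; exact h
  haveI : (ae (volume.restrict S)).NeBot := ae_neBot.mpr hSne
  have hdens := Besicovitch.ae_tendsto_measure_inter_div (volume : Measure (Fin n → ℝ)) S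
  have hcubes : ∀ᵐ η ∂volume.restrict S, ∀ j, η j ∈ Set.Ioo (0:ℝ) 1 := by
    rw [MeasureTheory.ae_iff]
    have hsub : {η : Fin n → ℝ | ¬ ∀ j, η j ∈ Set.Ioo (0:ℝ) 1} ⊆
        (⋃ j, {η : Fin n → ℝ | η j = 0}) ∪ cubeᶜ := by
      intro η hη
      by_cases hc : η ∈ cube
      · left
        simp only [Set.mem_setOf_eq, not_forall] at hη
        obtain ⟨j, hj⟩ := hη
        have hcj : η j ∈ Set.Ico (0:ℝ) 1 := by
          rw [hcube] at hc; exact (Set.mem_univ_pi.mp hc) j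
        have hzero : η j = 0 := by
          rcases eq_or_lt_of_le hcj.1 with h0 | h0
          · exact h0.symm
          · exact absurd ⟨h0, hcj.2⟩ hj
        exact Set.mem_iUnion.mpr ⟨j, hzero⟩
      · right; exact hc
    have h1 : (volume : Measure (Fin n → ℝ)) ((⋃ j, {η : Fin n → ℝ | η j = 0})) = 0 :=
      measure_iUnion_null fun j => Measure.pi_hyperplane _ j 0
    have h2 : volume.restrict S ((⋃ j, {η : Fin n → ℝ | η j = 0})) = 0 :=
      Measure.absolutelyContinuous_of_le Measure.restrict_le_self h1
    have h3 : volume.restrict S cubeᶜ = 0 := by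
      rw [Measure.restrict_apply (MeasurableSet.univ_pi fun _ =>
        (measurableSet_Ico : MeasurableSet (Set.Ico (0:ℝ) 1))).compl]
      have : cubeᶜ ∩ S = ∅ := by
        rw [hS]
        ext y
        simp only [Set.mem_inter_iff, Set.mem_compl_iff, Set.mem_empty_iff_false, iff_false]
        rintro ⟨hyc, _, hycube⟩
        exact hyc hycube
      rw [this, measure_empty]
    refine le_antisymm ?_ (by positivity)
    calc volume.restrict S {η | ¬ ∀ j, η j ∈ Set.Ioo (0:ℝ) 1}
        ≤ volume.restrict S (((⋃ j, {η : Fin n → ℝ | η j = 0})) ∪ cubeᶜ) := measure_mono hsub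
      _ ≤ volume.restrict S ((⋃ j, {η : Fin n → ℝ | η j = 0})) + volume.restrict S cubeᶜ :=
          measure_union_le _ _
      _ = 0 := by rw [h2, h3, add_zero]
  obtain ⟨x, hxdens, hxIoo⟩ := (hdens.and hcubes).exists
  have hF := Finset.univ_nonempty (α := Fin n)
  set F : ℝ := Finset.univ.inf' hF fun j => min (x j) (1 - x j) with hFdef
  clear_value F
  have hF0 : 0 < F := by
    rw [hFdef, Finset.lt_inf'_iff]
    intro j _
    exact lt_min (hxIoo j).1 (by linarith [(hxIoo j).2])
  have key : ∀ r : ℝ, 0 < r → r ≤ F/2 →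
      volume (S ∩ Metric.closedBall x r) / volume (Metric.closedBall x r)
        ≤ ENNReal.ofReal (1 - (min (C/2) ε / (2*C))^n / 2) := by
    intro r hr hrr
    have hrx : ∀ j, 0 ≤ x j - r ∧ x j + r < 1 := by
      intro j
      have hFj : F ≤ min (x j) (1 - x j) := by
        rw [hFdef]; exact Finset.inf'_le _ (Finset.mem_univ j)
      have h1 := min_le_left (x j) (1 - x j)
      have h2 := min_le_right (x j) (1 - x j)
      exact ⟨by linarith [(hxIoo j).1], by linarith [(hxIoo j).2]⟩
    calc volume (S ∩ Metric.closedBall x r) / volume (Metric.closedBall x r)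
        ≤ volume (E ∩ Metric.closedBall x r) / volume (Metric.closedBall x r) := by
          refine ENNReal.div_le_div_right (measure_mono ?_) _
          rw [hS]
          exact Set.inter_subset_inter_left _ Set.inter_subset_left
      _ ≤ _ := core_density_bound n hn ξ C hC hwd ε hε K x r hr hrx
  have hβpos : 0 < (min (C/2) ε/(2*C))^n/2 :=
    half_pos (pow_pos (div_pos (lt_min (by positivity) hε) (by positivity)) n)
  have hβlt : ENNReal.ofReal (1 - (min (C/2) ε/(2*C))^n/2) < 1 := by
    rw [ENNReal.ofReal_lt_one]
    linarith
  have hev1 := hxdens.eventually_mem (Ioi_mem_nhds hβlt)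
  have hev2 : ∀ᶠ r in 𝓝[>] (0:ℝ), r ∈ Set.Ioo (0:ℝ) (F/2) :=
    eventually_mem_set.mpr (Ioo_mem_nhdsGT_of_mem ⟨le_refl 0, by linarith⟩)
  obtain ⟨r, hr1, hr2⟩ := (hev1.and hev2).exists
  exact absurd (key r hr2.1 (le_of_lt hr2.2)) (not_le.mpr hr1)

/-- **Theorem 1.** If a sequence `ξ` in `[0,1)^n` is well distributed (there exist `C > 0`
and infinitely many positive integers `q` such that every box
`∏_j [η_j, η_j + C / q^(1/n))` contained in `[0,1)^n` contains a point `ξ_k` with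
`1 ≤ k ≤ q`), then for Lebesgue-almost all `η ∈ [0,1)^n` one has
`liminf_{k → ∞} k^(1/n) * max_j ‖ξ_{j,k} - η_j‖ = 0`. -/
theorem well_distributed_liminf_zero
    (n : ℕ) (hn : 1 ≤ n) (ξ : ℕ → Fin n → ℝ)
    (hξ : ∀ k : ℕ, 1 ≤ k → ∀ j, ξ k j ∈ Set.Ico (0 : ℝ) 1)
    (hwd : ∃ C : ℝ, 0 < C ∧ ∀ Q : ℕ, ∃ q : ℕ, Q ≤ q ∧ 1 ≤ q ∧
      ∀ η : Fin n → ℝ, (∀ j, η j ∈ Set.Ico (0 : ℝ) 1) →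
        (Set.univ.pi fun j => Set.Ico (η j) (η j + C / (q : ℝ) ^ ((1 : ℝ) / n))) ⊆
          (Set.univ.pi fun _ : Fin n => Set.Ico (0 : ℝ) 1) →
        ∃ k : ℕ, 1 ≤ k ∧ k ≤ q ∧
          ∀ j, ξ k j ∈ Set.Ico (η j) (η j + C / (q : ℝ) ^ ((1 : ℝ) / n))) :
    ∀ᵐ η ∂(volume.restrict (Set.univ.pi fun _ : Fin n => Set.Ico (0 : ℝ) 1)),
      Filter.atTop.liminf
        (fun k : ℕ => (k : ℝ) ^ ((1 : ℝ) / n) * ⨆ j, nint (ξ k j - η j)) = 0 := by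
  obtain ⟨C, hC, hwd'⟩ := hwd
  haveI : Nonempty (Fin n) := Fin.pos_iff_nonempty.mp hn
  have hnull : ∀ i K : ℕ, (volume.restrict (Set.univ.pi fun _ : Fin n => Set.Ico (0:ℝ) 1))
      {η : Fin n → ℝ | ∀ k, K ≤ k →
        1/((i:ℝ)+1) < (k : ℝ) ^ ((1:ℝ)/n) * ⨆ j, nint (ξ k j - η j)} = 0 := by
    intro i K
    rw [Measure.restrict_apply' (MeasurableSet.univ_pi fun _ =>
      (measurableSet_Ico : MeasurableSet (Set.Ico (0:ℝ) 1)))]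
    exact bad_null n hn ξ C hC hwd' (1/((i:ℝ)+1)) (by positivity) K
  have hae : ∀ᵐ η ∂(volume.restrict (Set.univ.pi fun _ : Fin n => Set.Ico (0:ℝ) 1)),
      ∀ i K : ℕ, ¬ (∀ k, K ≤ k →
        1/((i:ℝ)+1) < (k : ℝ) ^ ((1:ℝ)/n) * ⨆ j, nint (ξ k j - η j)) := by
    refine ae_all_iff.mpr fun i => ae_all_iff.mpr fun K => ?_
    rw [ae_iff]
    simpa only [not_not] using hnull i K
  filter_upwards [hae] with η hη
  have h0 : ∀ k : ℕ, 0 ≤ (k : ℝ) ^ ((1:ℝ)/n) * ⨆ j, nint (ξ k j - η j) := fun k =>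
    mul_nonneg (Real.rpow_nonneg (Nat.cast_nonneg _) _)
      (Real.iSup_nonneg fun j => nint_nonneg _)
  have hfreq : ∀ i : ℕ, ∃ᶠ k : ℕ in atTop,
      (k : ℝ) ^ ((1:ℝ)/n) * (⨆ j, nint (ξ k j - η j)) ≤ 1/((i:ℝ)+1) := by
    intro i
    rw [frequently_atTop]
    intro K
    have h1 := hη i K
    push_neg at h1
    obtain ⟨k, hk1, hk2⟩ := h1
    exact ⟨k, hk1, hk2⟩
  exact liminf_eq_zero h0 hfreq
end

section
/- Let α ∈ ℝ be irrational. Then there exist infinitely many positive integers q such that for every η ∈ [0,1) there exists a positive integer k ≤ q with ‖kα − η‖ ≤ 3/q, where ‖x‖ = min_{a∈ℤ} |x − a| is the distance from x to the nearest integer. -/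
lemma nint_le (x : ℝ) (m : ℤ) : nint x ≤ |x - (m : ℝ)| :=
  ciInf_le ⟨0, by rintro y ⟨a, rfl⟩; positivity⟩ m

lemma finite_aux (α : ℝ) (D : ℕ) :
    {r : ℚ | |α - (r : ℝ)| < 1 ∧ r.den ≤ D}.Finite := by
  set N : ℤ := ⌈(|α| + 1) * D⌉ with hN
  apply Set.Finite.of_finite_image (f := fun r : ℚ => (r.num, r.den))
  · apply Set.Finite.subset ((Set.finite_Icc (-N) N).prod (Set.finite_Icc 0 D))
    rintro ⟨n, d⟩ ⟨r, ⟨h1, h2⟩, heq⟩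
    simp only [Prod.mk.injEq] at heq
    obtain ⟨rfl, rfl⟩ := heq
    have hden : (0:ℝ) < r.den := by positivity
    have hr : |(r : ℝ)| ≤ |α| + 1 := by
      have := abs_sub_abs_le_abs_sub (r : ℝ) α
      rw [abs_sub_comm] at h1
      linarith
    have hnum : |(r.num : ℝ)| ≤ (|α| + 1) * D := by
      have hcast : (r : ℝ) = (r.num : ℝ) / (r.den : ℝ) := Rat.cast_def r
      rw [hcast, abs_div, abs_of_pos hden, div_le_iff₀ hden] at hr
      calc |(r.num : ℝ)| ≤ (|α| + 1) * r.den := hr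
        _ ≤ (|α| + 1) * D := by
            have h0 : (0:ℝ) ≤ |α| + 1 := by positivity
            have hD : (r.den : ℝ) ≤ D := by exact_mod_cast h2
            nlinarith
    constructor
    · simp only [Set.mem_Icc]
      have h1 : |(r.num : ℝ)| ≤ (N : ℝ) := hnum.trans (Int.le_ceil _)
      have h2 : |r.num| ≤ N := by exact_mod_cast h1
      constructor <;> [linarith [neg_abs_le r.num]; linarith [le_abs_self r.num]]
    · exact Set.mem_Icc.mpr ⟨Nat.zero_le _, h2⟩
  · intro r _ s _ h
    simp only [Prod.mk.injEq] at h
    exact Rat.ext h.1 h.2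

/-- **Chebyshev's theorem.** For every irrational `α` there exist infinitely many
positive integers `q` such that for every `η ∈ [0,1)` there is a positive integer
`k ≤ q` with `‖kα - η‖ ≤ 3/q`. -/
theorem chebyshev_inhomogeneous (α : ℝ) (hα : Irrational α) :
    ∀ Q : ℕ, ∃ q : ℕ, Q ≤ q ∧ 1 ≤ q ∧
      ∀ η ∈ Set.Ico (0 : ℝ) 1, ∃ k : ℕ, 1 ≤ k ∧ k ≤ q ∧
        nint ((k : ℝ) * α - η) ≤ 3 / (q : ℝ) := by
  intro Q
  have hS := Real.infinite_rat_abs_sub_lt_one_div_den_sq_of_irrational hα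
  obtain ⟨r, hrS, hrden⟩ : ∃ r : ℚ, |α - (r:ℝ)| < 1 / (r.den : ℝ)^2 ∧ Q ≤ r.den := by
    by_contra hcon
    push_neg at hcon
    refine hS (Set.Finite.subset (finite_aux α Q) ?_)
    intro r hr
    have hden : (1:ℝ) ≤ r.den := by exact_mod_cast r.pos
    refine ⟨lt_of_lt_of_le hr ?_, le_of_lt (hcon r hr)⟩
    rw [div_le_one (by positivity)]
    nlinarith
  set q : ℕ := r.den with hq
  have hq1 : 1 ≤ q := r.pos
  have hqR : (0:ℝ) < q := by exact_mod_cast hq1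
  refine ⟨q, hrden, hq1, ?_⟩
  rintro η ⟨hη0, hη1⟩
  have hcop : IsCoprime r.num (q : ℤ) := by
    rw [Int.isCoprime_iff_gcd_eq_one]
    exact r.reduced
  obtain ⟨u, v, huv⟩ := hcop
  set p : ℤ := r.num with hp
  set a : ℤ := ⌈(q : ℝ) * η⌉ with ha
  set t : ℤ := (a * u) % q with ht
  have hqZ : (0:ℤ) < q := by exact_mod_cast hq1
  have ht0 : 0 ≤ t := Int.emod_nonneg _ (ne_of_gt hqZ)
  have htq : t < q := Int.emod_lt_of_pos _ hqZ
  set kZ : ℤ := if t = 0 then (q:ℤ) else t with hkZ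
  have hk1 : 1 ≤ kZ := by rw [hkZ]; split <;> omega
  have hkq : kZ ≤ q := by rw [hkZ]; split <;> omega
  have hdvd1 : (q:ℤ) ∣ a * u - t := Int.dvd_self_sub_of_emod_eq rfl
  have hdvd2 : (q:ℤ) ∣ a * u - kZ := by
    rw [hkZ]; split_ifs with h0
    · rw [h0, sub_zero] at hdvd1
      simpa using dvd_sub hdvd1 (dvd_refl (q:ℤ))
    · exact hdvd1
  have hdvd3 : (q:ℤ) ∣ kZ * p - a := by
    have : kZ * p - a = -(a * u - kZ) * p - a * v * q := by linear_combination a * huv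
    rw [this]
    exact dvd_sub (Dvd.dvd.mul_right (dvd_neg.mpr hdvd2) p) (Dvd.dvd.mul_left (dvd_refl _) _)
  obtain ⟨m, hm⟩ := hdvd3
  -- real estimates
  have hmR : (kZ:ℝ) * p - a = q * m := by exact_mod_cast congrArg (fun z : ℤ => (z:ℝ)) hm
  have hcast : (r : ℝ) = (p : ℝ) / (q : ℝ) := Rat.cast_def r
  have habs1 : |α - (p:ℝ)/q| < 1/(q:ℝ)^2 := by rw [← hcast]; exact hrS
  have hkR1 : (1:ℝ) ≤ (kZ:ℝ) := by exact_mod_cast hk1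
  have hkRq : (kZ:ℝ) ≤ q := by exact_mod_cast hkq
  have hbound1 : |(kZ:ℝ) * (α - (p:ℝ)/q)| ≤ 1 / q := by
    rw [abs_mul, abs_of_pos (by linarith : (0:ℝ) < (kZ:ℝ))]
    calc (kZ:ℝ) * |α - (p:ℝ)/q| ≤ (q:ℝ) * (1/(q:ℝ)^2) := by
          apply mul_le_mul hkRq (le_of_lt habs1) (abs_nonneg _) (le_of_lt hqR)
      _ = 1 / q := by field_simp
  have haη1 : (q:ℝ) * η ≤ a := Int.le_ceil _
  have haη2 : (a:ℝ) ≤ (q:ℝ) * η + 1 := le_of_lt (Int.ceil_lt_add_one _)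
  have hbound2 : |(a:ℝ)/q - η| ≤ 1 / q := by
    have h : (a:ℝ)/q - η = ((a:ℝ) - (q:ℝ)*η)/q := by field_simp
    rw [h, abs_div, abs_of_pos hqR]
    gcongr
    rw [abs_le]
    constructor <;> linarith
  set k : ℕ := kZ.toNat with hk
  have hkZk : (k : ℤ) = kZ := Int.toNat_of_nonneg (by omega)
  have hkRk : (k : ℝ) = (kZ : ℝ) := by exact_mod_cast congrArg (fun z : ℤ => (z:ℝ)) hkZk
  refine ⟨k, by omega, by omega, ?_⟩
  have key : (k:ℝ) * α - η - (m:ℝ) = (kZ:ℝ) * (α - (p:ℝ)/q) + ((a:ℝ)/q - η) := by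
    rw [hkRk]
    field_simp
    linear_combination hmR
  calc nint ((k : ℝ) * α - η) ≤ |(k:ℝ) * α - η - (m:ℝ)| := nint_le _ m
    _ ≤ |(kZ:ℝ) * (α - (p:ℝ)/q)| + |(a:ℝ)/q - η| := by rw [key]; exact abs_add_le _ _
    _ ≤ 1/q + 1/q := add_le_add hbound1 hbound2
    _ ≤ 3 / q := by rw [← add_div]; gcongr <;> norm_num
end
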